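/- For every dominant weight λ, the set of extreme points (vertices) of IP_λ is exactly the set of points v_{I,J}(λ), as (I, J) ranges over all pairs of disjoint subsets with I ∪ J = {1, …, r}. -/

import Mathlib

/-- The intersection polytope `IP_lam`: the set of dominant weights `μ` such that
`lam - μ` is a nonnegative rational combination of the simple roots. -/
def IP {V : Type*} [AddCommGroup V] [Module ℚ V] {r : ℕ}
    (b : Fin r → V) (coroot : Fin r → Module.Dual ℚ V) (lam : V) : Set V :=
  {μ | (∀ i, 0 ≤ coroot i μ) ∧
    ∃ c : Fin r → ℚ, (∀ i, 0 ≤ c i) ∧ lam - μ = ∑ i, c i • b i}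

open Finset

theorem exists_invariant_form {V : Type*} [AddCommGroup V] [Module ℚ V] {r : ℕ}
    (b : Module.Basis (Fin r) ℚ V) (coroot : Fin r → Module.Dual ℚ V)
    (hdiag : ∀ i, coroot i (b i) = 2)
    (Φ : Set V) (hΦfin : Φ.Finite) (hΦroot : ∀ i, b i ∈ Φ)
    (hΦrefl : ∀ β ∈ Φ, ∀ i, β - coroot i β • b i ∈ Φ) :
    ∃ B : V →ₗ[ℚ] V →ₗ[ℚ] ℚ, (∀ v w, B v w = B w v) ∧ (∀ v, v ≠ 0 → 0 < B v v) ∧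
      (∀ k (v : V), coroot k v * B (b k) (b k) = 2 * B v (b k)) := by
  classical
  -- the simple reflections
  set σ : Fin r → (V →ₗ[ℚ] V) := fun k => LinearMap.id - (coroot k).smulRight (b k) with hσ
  have hσapp : ∀ k v, σ k v = v - coroot k v • b k := fun k v => rfl
  have hkey : ∀ k (v : V), coroot k (v - coroot k v • b k) = - coroot k v := by
    intro k v
    rw [map_sub, map_smul, hdiag, smul_eq_mul]; ring
  have hinv : ∀ k, Function.Involutive (σ k) := by
    intro k v
    rw [hσapp, hσapp, hkey, neg_smul, sub_neg_eq_add, sub_add_cancel]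
  set s : Fin r → (V ≃ₗ[ℚ] V) := fun k => LinearEquiv.ofInvolutive (σ k) (hinv k) with hs
  have hsapp : ∀ k v, s k v = v - coroot k v • b k := fun k v => rfl
  set W : Subgroup (V ≃ₗ[ℚ] V) := Subgroup.closure (Set.range s) with hW
  have hmaps : ∀ g ∈ W, Set.MapsTo g Φ Φ := by
    intro g hg
    refine Subgroup.closure_induction ?_ ?_ ?_ ?_ hg
    · rintro g ⟨k, rfl⟩ v hv
      exact hΦrefl v hv k
    · intro v hv; exact hv
    · intro g₁ g₂ _ _ h1 h2 v hv
      exact h1 (h2 hv)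
    · intro g _ h
      have hbij : Set.BijOn g Φ Φ :=
        (Set.Finite.injOn_iff_bijOn_of_mapsTo hΦfin h).mp (g.injective.injOn)
      intro v hv
      obtain ⟨u, hu, hgu⟩ := hbij.surjOn hv
      have : g⁻¹ (g u) = u := by
        show (g⁻¹ * g) u = u
        rw [inv_mul_cancel]; rfl
      rw [← hgu, this]; exact hu
  haveI : Finite ↥Φ := hΦfin.to_subtype
  have hinj : Function.Injective (fun (g : ↥W) (p : ↥Φ) =>
      (⟨g.1 p.1, hmaps g.1 g.2 p.2⟩ : ↥Φ)) := by
    intro g₁ g₂ h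
    have h' : ∀ v (hv : v ∈ Φ), g₁.1 v = g₂.1 v := fun v hv =>
      congrArg Subtype.val (congrFun h ⟨v, hv⟩)
    have : (g₁.1 : V →ₗ[ℚ] V) = (g₂.1 : V →ₗ[ℚ] V) :=
      b.ext fun i => h' (b i) (hΦroot i)
    exact Subtype.ext (LinearEquiv.toLinearMap_injective this)
  haveI : Finite ↥W := Finite.of_injective _ hinj
  haveI : Fintype ↥W := Fintype.ofFinite _
  -- base form
  set B0 : V →ₗ[ℚ] V →ₗ[ℚ] ℚ := LinearMap.mk₂ ℚ
    (fun v w => ∑ i, b.repr v i * b.repr w i)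
    (by intro m₁ m₂ n; simp [add_mul, Finset.sum_add_distrib])
    (by intro c m n; simp [smul_eq_mul, Finset.mul_sum, mul_assoc])
    (by intro m n₁ n₂; simp [mul_add, Finset.sum_add_distrib])
    (by intro c m n; simp [smul_eq_mul, Finset.mul_sum]; ring_nf; simp [mul_comm, mul_left_comm])
    with hB0
  have hB0app : ∀ v w, B0 v w = ∑ i, b.repr v i * b.repr w i := fun _ _ => rfl
  have hB0symm : ∀ v w, B0 v w = B0 w v := by
    intro v w; rw [hB0app, hB0app]; exact Finset.sum_congr rfl fun i _ => mul_comm _ _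
  have hB0nn : ∀ v, 0 ≤ B0 v v := by
    intro v; rw [hB0app]; exact Finset.sum_nonneg fun i _ => mul_self_nonneg _
  have hB0pos : ∀ v, v ≠ 0 → 0 < B0 v v := by
    intro v hv
    rw [hB0app]
    have : ∃ i, b.repr v i ≠ 0 := by
      by_contra h
      push_neg at h
      exact hv (by
        have : b.repr v = 0 := by ext i; exact h i
        simpa using congrArg b.repr.symm this)
    obtain ⟨i, hi⟩ := this
    exact Finset.sum_pos' (fun j _ => mul_self_nonneg _)
      ⟨i, Finset.mem_univ i, mul_self_pos.mpr hi⟩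
  set B : V →ₗ[ℚ] V →ₗ[ℚ] ℚ := LinearMap.mk₂ ℚ
    (fun v w => ∑ g : ↥W, B0 (g.1 v) (g.1 w))
    (by intro m₁ m₂ n; simp [map_add, LinearMap.add_apply, Finset.sum_add_distrib])
    (by intro c m n
        simp [map_smul, LinearMap.smul_apply, smul_eq_mul, Finset.mul_sum])
    (by intro m n₁ n₂; simp [map_add, Finset.sum_add_distrib])
    (by intro c m n
        simp [map_smul, smul_eq_mul, Finset.mul_sum])
    with hB
  have hBapp : ∀ v w, B v w = ∑ g : ↥W, B0 (g.1 v) (g.1 w) := fun _ _ => rfl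
  have hBsymm : ∀ v w, B v w = B w v := by
    intro v w; rw [hBapp, hBapp]
    exact Finset.sum_congr rfl fun g _ => hB0symm _ _
  have hBpos : ∀ v, v ≠ 0 → 0 < B v v := by
    intro v hv
    rw [hBapp]
    refine Finset.sum_pos' (fun g _ => hB0nn _) ⟨1, Finset.mem_univ 1, ?_⟩
    have h1 : ((1 : ↥W) : V ≃ₗ[ℚ] V) v = v := rfl
    rw [h1]
    exact hB0pos v hv
  have hW_s : ∀ k, s k ∈ W := fun k => Subgroup.subset_closure ⟨k, rfl⟩
  have hInv : ∀ k (v w : V), B (s k v) (s k w) = B v w := by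
    intro k v w
    rw [hBapp, hBapp]
    exact Fintype.sum_equiv (Equiv.mulRight (⟨s k, hW_s k⟩ : ↥W)) _ _ (fun g => rfl)
  have hid : ∀ k (v : V), coroot k v * B (b k) (b k) = 2 * B v (b k) := by
    intro k v
    have h1 := hInv k v (b k)
    rw [hsapp, hsapp, hdiag] at h1
    simp only [map_sub, map_smul, LinearMap.sub_apply, LinearMap.smul_apply,
      smul_eq_mul] at h1
    linarith [h1]
  exact ⟨B, hBsymm, hBpos, hid⟩

set_option maxHeartbeats 2000000 in
/-- For every dominant weight `lam`, the set of extreme points (vertices)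
of `IP_lam` is exactly the set of points `v_{I,J}(lam)` (the unique point `v` with
`⟨v, α_i^∨⟩ = 0` for `i ∈ I` and `⟨lam − v, x_j⟩ = 0` for `j ∈ J`), as `(I, J)` ranges
over all pairs of disjoint subsets with `I ∪ J = {1, …, r}`. -/
theorem stmt_3 {V : Type*} [AddCommGroup V] [Module ℚ V] {r : ℕ}
    (b : Module.Basis (Fin r) ℚ V) (coroot : Fin r → Module.Dual ℚ V)
    (hdiag : ∀ i, coroot i (b i) = 2)
    (hoff : ∀ i j : Fin r, i ≠ j → coroot j (b i) ≤ 0)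
    (hint : ∀ i j : Fin r, ∃ n : ℤ, coroot j (b i) = (n : ℚ))
    (Φ : Set V) (hΦfin : Φ.Finite) (hΦroot : ∀ i, b i ∈ Φ)
    (hΦrefl : ∀ β ∈ Φ, ∀ i, β - coroot i β • b i ∈ Φ)
    (x : Fin r → Module.Dual ℚ V)
    (hx : ∀ i j : Fin r, x j (b i) = if i = j then 1 else 0)
    (lam : V) (hlam : ∀ i, 0 ≤ coroot i lam) :
    ∀ μ : V, μ ∈ (IP (⇑b) coroot lam).extremePoints ℚ ↔
      ∃ I J : Finset (Fin r), Disjoint I J ∧ I ∪ J = Finset.univ ∧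
        (∀ i ∈ I, coroot i μ = 0) ∧ (∀ j ∈ J, x j (lam - μ) = 0) := by
  classical
  obtain ⟨B, hBsymm, hBpos, hBid⟩ :=
    exists_invariant_form b coroot hdiag Φ hΦfin hΦroot hΦrefl
  have hBkk : ∀ k, 0 < B (b k) (b k) := fun k => hBpos _ (b.ne_zero k)
  have hBnn : ∀ v, 0 ≤ B v v := by
    intro v
    rcases eq_or_ne v 0 with rfl | h
    · simp
    · exact (hBpos v h).le
  have hB0 : ∀ v, B v v = 0 → v = 0 := by
    intro v h
    by_contra hne
    exact absurd h (ne_of_gt (hBpos v hne))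
  have hBoff : ∀ i j, i ≠ j → B (b i) (b j) ≤ 0 := by
    intro i j hij
    have h1 := hBid j (b i)
    nlinarith [hBkk j, hoff i j hij]
  have hxs : ∀ (f : Fin r → ℚ) (j : Fin r), x j (∑ i, f i • b i) = f j := by
    intro f j
    rw [map_sum]
    simp only [map_smul, smul_eq_mul, hx, mul_ite, mul_one, mul_zero]
    simp
  have hxrepr : ∀ (v : V) (j : Fin r), x j v = b.repr v j := by
    intro v j
    conv_lhs => rw [← b.sum_repr v]
    rw [hxs]
  have hvrep : ∀ v : V, v = ∑ i, x i v • b i := by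
    intro v
    conv_lhs => rw [← b.sum_repr v]
    exact Finset.sum_congr rfl fun i _ => by rw [hxrepr]
  have hcor : ∀ (v : V) (i : Fin r), coroot i v = ∑ j, x j v * coroot i (b j) := by
    intro v i
    conv_lhs => rw [hvrep v]
    rw [map_sum]
    exact Finset.sum_congr rfl fun j _ => by rw [map_smul, smul_eq_mul]
  have hBexp : ∀ v u : V, B v u = ∑ i, x i u * B v (b i) := by
    intro v u
    conv_lhs => rw [hvrep u]
    rw [map_sum]
    exact Finset.sum_congr rfl fun i _ => by rw [map_smul, smul_eq_mul]
  -- if w is killed by all coroots from I and all x's from J, with I ∪ J = univ, then w = 0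
  have huniq : ∀ I J : Finset (Fin r), I ∪ J = Finset.univ → ∀ w : V,
      (∀ i ∈ I, coroot i w = 0) → (∀ j ∈ J, x j w = 0) → w = 0 := by
    intro I J hIJ w hIw hJw
    apply hB0
    rw [hBexp w w]
    apply Finset.sum_eq_zero
    intro i _
    have hi : i ∈ I ∪ J := hIJ ▸ Finset.mem_univ i
    rcases Finset.mem_union.mp hi with hi | hi
    · have h1 := hBid i w
      rw [hIw i hi, zero_mul] at h1
      have h2 : B w (b i) = 0 := by linarith
      rw [h2, mul_zero]
    · rw [hJw i hi, zero_mul]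
  intro μ
  constructor
  · intro hext
    obtain ⟨hmem, hexch⟩ := mem_extremePoints.mp hext
    obtain ⟨hdom, c₀, hc₀, hrep⟩ := hmem
    set c : Fin r → ℚ := fun i => x i (lam - μ) with hcdef
    have hceq : ∀ i, c i = c₀ i := by
      intro i
      show x i (lam - μ) = c₀ i
      rw [hrep, hxs]
    have hcnn : ∀ i, 0 ≤ c i := fun i => by rw [hceq i]; exact hc₀ i
    have hrep' : lam - μ = ∑ i, c i • b i := hvrep _
    set I' : Finset (Fin r) := Finset.univ.filter (fun i => coroot i μ = 0) with hI'
    set J' : Finset (Fin r) := Finset.univ.filter (fun j => c j = 0) with hJ'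
    have hcover : I' ∪ J' = Finset.univ := by
      rw [Finset.eq_univ_iff_forall]
      intro k
      by_contra hk
      simp only [hI', hJ', Finset.mem_union, Finset.mem_filter, Finset.mem_univ,
        true_and] at hk
      push_neg at hk
      obtain ⟨hkc, hkx⟩ := hk
      have hA : ∀ i, coroot i μ = 0 → c i = 0 → ∀ j, c j ≠ 0 → coroot i (b j) = 0 := by
        intro i hiμ hic
        have h1 : coroot i lam = ∑ j, c j * coroot i (b j) := by
          have h2 := hcor (lam - μ) i
          rw [map_sub, hiμ, sub_zero] at h2
          exact h2
        have h3 : ∀ j, c j * coroot i (b j) ≤ 0 := by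
          intro j
          rcases eq_or_ne (c j) 0 with h | h
          · rw [h, zero_mul]
          · have hij : j ≠ i := fun hji => h (hji ▸ hic)
            exact mul_nonpos_of_nonneg_of_nonpos (hcnn j) (hoff j i hij)
        have h4 : (∑ j, c j * coroot i (b j)) = 0 :=
          le_antisymm (Finset.sum_nonpos fun j _ => h3 j) (h1 ▸ hlam i)
        have h5 := (Finset.sum_eq_zero_iff_of_nonpos (fun j _ => h3 j)).mp h4
        intro j hj
        rcases mul_eq_zero.mp (h5 j (Finset.mem_univ j)) with h | h
        · exact absurd h hj
        · exact h
      set T : Finset (Fin r) :=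
        Finset.univ.filter (fun i => coroot i μ = 0 ∧ c i ≠ 0) with hT
      have hTJ : Disjoint T J' := by
        rw [Finset.disjoint_left]
        intro i hiT hiJ
        rw [hT, Finset.mem_filter] at hiT
        rw [hJ', Finset.mem_filter] at hiJ
        exact hiT.2.2 hiJ.2
      have hkT : k ∉ T := by
        rw [hT, Finset.mem_filter]
        rintro ⟨-, h, -⟩
        exact hkc h
      have hkJ : k ∉ J' := by
        rw [hJ', Finset.mem_filter]
        rintro ⟨-, h⟩
        exact hkx h
      have hcard : T.card + J'.card < r := by
        have h7 : T ∪ J' ⊆ Finset.univ.erase k := by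
          intro j hj
          rw [Finset.mem_erase]
          refine ⟨?_, Finset.mem_univ j⟩
          rintro rfl
          rcases Finset.mem_union.mp hj with h | h
          exacts [hkT h, hkJ h]
        have h8 := Finset.card_le_card h7
        rw [Finset.card_union_of_disjoint hTJ] at h8
        rw [Finset.card_erase_of_mem (Finset.mem_univ k), Finset.card_univ,
          Fintype.card_fin] at h8
        have h10 : 0 < r := k.pos
        omega
      set F : (Fin r → ℚ) →ₗ[ℚ] ((↥T → ℚ) × (↥J' → ℚ)) := LinearMap.prod
        (LinearMap.pi fun i => ∑ j, (coroot i.1 (b j)) • LinearMap.proj j)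
        (LinearMap.pi fun j => LinearMap.proj j.1) with hF
      have hFnotinj : ¬ Function.Injective F := by
        intro hinj
        have h11 := LinearMap.finrank_le_finrank_of_injective hinj
        rw [Module.finrank_fintype_fun_eq_card, Fintype.card_fin, Module.finrank_prod,
          Module.finrank_fintype_fun_eq_card, Module.finrank_fintype_fun_eq_card,
          Fintype.card_coe, Fintype.card_coe] at h11
        omega
      have h12 : LinearMap.ker F ≠ ⊥ := fun h => hFnotinj (LinearMap.ker_eq_bot.mp h)
      obtain ⟨t, htker, htne⟩ := Submodule.exists_mem_ne_zero_of_ne_bot h12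
      have hFt := LinearMap.mem_ker.mp htker
      have ht1 : ∀ i (hi : i ∈ T), ∑ j, coroot i (b j) * t j = 0 := by
        intro i hi
        have h13 := congrFun (congrArg Prod.fst hFt) ⟨i, hi⟩
        simpa [hF, LinearMap.prod_apply, LinearMap.pi_apply, LinearMap.sum_apply,
          LinearMap.smul_apply, LinearMap.proj_apply, smul_eq_mul] using h13
      have ht2 : ∀ j, c j = 0 → t j = 0 := by
        intro j hj
        have hjJ : j ∈ J' := by
          rw [hJ', Finset.mem_filter]; exact ⟨Finset.mem_univ j, hj⟩
        have h13 := congrFun (congrArg Prod.snd hFt) ⟨j, hjJ⟩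
        simpa [hF, LinearMap.prod_apply, LinearMap.pi_apply, LinearMap.proj_apply]
          using h13
      set w : V := ∑ j, t j • b j with hwdef
      have hxw : ∀ j, x j w = t j := fun j => hxs t j
      have hwne : w ≠ 0 := by
        intro h0
        apply htne
        funext j
        have h13 := hxw j
        rw [h0, map_zero] at h13
        exact h13.symm
      have hcw : ∀ i, coroot i μ = 0 → coroot i w = 0 := by
        intro i hi
        rw [hcor w i]
        rcases eq_or_ne (c i) 0 with hci | hci
        · apply Finset.sum_eq_zero
          intro j _
          rcases eq_or_ne (c j) 0 with hcj | hcj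
          · rw [hxw j, ht2 j hcj, zero_mul]
          · rw [hA i hi hci j hcj, mul_zero]
        · have hiT : i ∈ T := by
            rw [hT, Finset.mem_filter]; exact ⟨Finset.mem_univ i, hi, hci⟩
          rw [← ht1 i hiT]
          exact Finset.sum_congr rfl fun j _ => by rw [hxw j, mul_comm]
      have hxwJ : ∀ j, c j = 0 → x j w = 0 := fun j hj => by
        rw [hxw j]; exact ht2 j hj
      set P : Fin r → ℚ := fun i => min
        (if coroot i μ = 0 then 1 else coroot i μ / (|coroot i w| + 1))
        (if c i = 0 then 1 else c i / (|x i w| + 1)) with hP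
      have hPpos : ∀ i, 0 < P i := by
        intro i
        rw [hP]
        apply lt_min
        · split_ifs with h
          · exact one_pos
          · exact div_pos (lt_of_le_of_ne (hdom i) (Ne.symm h)) (by positivity)
        · split_ifs with h
          · exact one_pos
          · exact div_pos (lt_of_le_of_ne (hcnn i) (Ne.symm h)) (by positivity)
      obtain ⟨ε, hεpos, hεle⟩ : ∃ ε : ℚ, 0 < ε ∧ ∀ i, ε ≤ P i :=
        ⟨Finset.univ.inf' ⟨k, Finset.mem_univ k⟩ P,
          (Finset.lt_inf'_iff _).mpr fun i _ => hPpos i,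
          fun i => Finset.inf'_le _ (Finset.mem_univ i)⟩
      have hbound1 : ∀ i, coroot i μ ≠ 0 → ε * (|coroot i w| + 1) ≤ coroot i μ := by
        intro i h
        have h1 : ε ≤ coroot i μ / (|coroot i w| + 1) := by
          have h2 := (hεle i).trans (min_le_left _ _)
          rwa [if_neg h] at h2
        calc ε * (|coroot i w| + 1)
            ≤ (coroot i μ / (|coroot i w| + 1)) * (|coroot i w| + 1) :=
              mul_le_mul_of_nonneg_right h1 (by positivity)
          _ = coroot i μ := div_mul_cancel₀ _ (by positivity)
      have hbound2 : ∀ i, c i ≠ 0 → ε * (|x i w| + 1) ≤ c i := by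
        intro i h
        have h1 : ε ≤ c i / (|x i w| + 1) := by
          have h2 := (hεle i).trans (min_le_right _ _)
          rwa [if_neg h] at h2
        calc ε * (|x i w| + 1)
            ≤ (c i / (|x i w| + 1)) * (|x i w| + 1) :=
              mul_le_mul_of_nonneg_right h1 (by positivity)
          _ = c i := div_mul_cancel₀ _ (by positivity)
      have hmempm : ∀ d : ℚ, d = 1 ∨ d = -1 → μ + (d * ε) • w ∈ IP (⇑b) coroot lam := by
        intro d hd
        refine ⟨?_, fun i => c i - (d * ε) * x i w, ?_, ?_⟩
        · intro i
          rw [map_add, map_smul, smul_eq_mul]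
          rcases eq_or_ne (coroot i μ) 0 with h | h
          · rw [h, hcw i h, mul_zero, add_zero]
          · have h1 := hbound1 i h
            have h2 := le_abs_self (coroot i w)
            have h3 := neg_abs_le (coroot i w)
            rcases hd with rfl | rfl <;> nlinarith [hεpos]
        · intro i
          dsimp only
          rcases eq_or_ne (c i) 0 with h | h
          · rw [h, hxwJ i h, mul_zero, sub_zero]
          · have h1 := hbound2 i h
            have h2 := le_abs_self (x i w)
            have h3 := neg_abs_le (x i w)
            rcases hd with rfl | rfl <;> nlinarith [hεpos]
        · have h1 : lam - (μ + (d * ε) • w) = (lam - μ) - (d * ε) • w := by abel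
          have h2 : (d * ε) • w = ∑ i, ((d * ε) * x i w) • b i := by
            conv_lhs => rw [hvrep w]
            rw [Finset.smul_sum]
            exact Finset.sum_congr rfl fun i _ => by rw [smul_smul]
          rw [h1, hrep', h2, ← Finset.sum_sub_distrib]
          exact Finset.sum_congr rfl fun i _ => by rw [sub_smul]
      have hseg : μ ∈ openSegment ℚ (μ + ((1:ℚ) * ε) • w) (μ + ((-1:ℚ) * ε) • w) :=
        ⟨1/2, 1/2, by norm_num, by norm_num, by norm_num, by module⟩
      have h14 := hexch _ (hmempm 1 (Or.inl rfl)) _ (hmempm (-1) (Or.inr rfl)) hseg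
      have h15 : ((1:ℚ) * ε) • w = 0 := by
        have h16 := h14.1
        rwa [add_eq_left] at h16
      rw [one_mul, smul_eq_zero] at h15
      rcases h15 with h | h
      · exact absurd h (ne_of_gt hεpos)
      · exact hwne h
    refine ⟨I', J' \ I', Finset.disjoint_sdiff, ?_, ?_, ?_⟩
    · rw [Finset.union_sdiff_self_eq_union, hcover]
    · intro i hi
      rw [hI', Finset.mem_filter] at hi
      exact hi.2
    · intro j hj
      have h17 := (Finset.mem_sdiff.mp hj).1
      rw [hJ', Finset.mem_filter] at h17
      exact h17.2
  · rintro ⟨I, J, hdisj, hunion, hI, hJ⟩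
    have hIJ : ∀ i : Fin r, i ∈ I ∨ i ∈ J := fun i =>
      Finset.mem_union.mp (hunion ▸ Finset.mem_univ i)
    set c : Fin r → ℚ := fun i => x i (lam - μ) with hcdef
    have hrepμ : lam - μ = ∑ i, c i • b i := hvrep _
    have hcJ : ∀ j ∈ J, c j = 0 := hJ
    -- Stieltjes positivity of c on I
    have hGnn : ∀ i ∈ I, 0 ≤ B (lam - μ) (b i) := by
      intro i hi
      have h1 : coroot i (lam - μ) = coroot i lam := by
        rw [map_sub, hI i hi, sub_zero]
      have h2 := hBid i (lam - μ)
      nlinarith [hBkk i, hlam i]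
    set n : Fin r → ℚ := fun i => max (-(c i)) 0 with hn
    set p : Fin r → ℚ := fun i => max (c i) 0 with hp
    have hnnn : ∀ i, 0 ≤ n i := fun i => le_max_right _ _
    have hpnn : ∀ i, 0 ≤ p i := fun i => le_max_right _ _
    have hnp : ∀ i, c i = p i - n i := by
      intro i
      rcases le_total 0 (c i) with h | h
      · rw [hn, hp]; dsimp only
        rw [max_eq_left h, max_eq_right (neg_nonpos.mpr h)]; ring
      · rw [hn, hp]; dsimp only
        rw [max_eq_right h, max_eq_left (neg_nonneg.mpr h)]; ring
    have hnpz : ∀ i, n i * p i = 0 := by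
      intro i
      rcases le_total 0 (c i) with h | h
      · rw [hn]; dsimp only; rw [max_eq_right (neg_nonpos.mpr h), zero_mul]
      · rw [hp]; dsimp only; rw [max_eq_right h, mul_zero]
    have hnJ : ∀ j ∈ J, n j = 0 := by
      intro j hj
      rw [hn]; dsimp only; rw [hcJ j hj]; simp
    set wm : V := ∑ i, n i • b i with hwm
    set wp : V := ∑ i, p i • b i with hwp
    have hw : lam - μ = wp - wm := by
      rw [hrepμ, hwp, hwm, ← Finset.sum_sub_distrib]
      exact Finset.sum_congr rfl fun i _ => by rw [hnp i, sub_smul]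
    have hBm : ∀ u : V, B wm u = ∑ i, n i * B (b i) u := by
      intro u
      rw [hwm, map_sum, LinearMap.sum_apply]
      exact Finset.sum_congr rfl fun i _ => by
        rw [map_smul, LinearMap.smul_apply, smul_eq_mul]
    have h3 : 0 ≤ B wm (lam - μ) := by
      rw [hBm]
      apply Finset.sum_nonneg
      intro i _
      rcases hIJ i with hi | hi
      · exact mul_nonneg (hnnn i) (by rw [hBsymm]; exact hGnn i hi)
      · rw [hnJ i hi, zero_mul]
    have h4 : B wm wp ≤ 0 := by
      rw [hBm]
      apply Finset.sum_nonpos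
      intro i _
      have h5 : B (b i) wp = ∑ j, p j * B (b i) (b j) := by
        rw [hwp, map_sum]
        exact Finset.sum_congr rfl fun j _ => by rw [map_smul, smul_eq_mul]
      rw [h5, Finset.mul_sum]
      apply Finset.sum_nonpos
      intro j _
      rcases eq_or_ne j i with rfl | hne
      · have : n j * (p j * B (b j) (b j)) = (n j * p j) * B (b j) (b j) := by ring
        rw [this, hnpz j, zero_mul]
      · have := hBoff i j (Ne.symm hne)
        have h6 : p j * B (b i) (b j) ≤ 0 := mul_nonpos_of_nonneg_of_nonpos (hpnn j) this
        exact mul_nonpos_of_nonneg_of_nonpos (hnnn i) h6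
    have h7 : B wm wm = 0 := by
      have h8 : B wm (lam - μ) = B wm wp - B wm wm := by rw [hw, map_sub]
      nlinarith [hBnn wm]
    have hwm0 : wm = 0 := hB0 _ h7
    have hcnn : ∀ i, 0 ≤ c i := by
      intro i
      have h9 : x i wm = n i := by rw [hwm]; exact hxs n i
      rw [hwm0, map_zero] at h9
      have h10 : -(c i) ≤ n i := le_max_left _ _
      linarith [h9 ▸ h10]
    have hmem : μ ∈ IP (⇑b) coroot lam := by
      refine ⟨?_, c, hcnn, hrepμ⟩
      intro i
      rcases hIJ i with hi | hi
      · rw [hI i hi]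
      · have h8 : coroot i (lam - μ) ≤ 0 := by
          rw [hcor (lam - μ) i]
          apply Finset.sum_nonpos
          intro j _
          rcases eq_or_ne j i with rfl | hne
          · have : x j (lam - μ) = c j := rfl
            rw [this, hcJ j hi, zero_mul]
          · exact mul_nonpos_of_nonneg_of_nonpos (hcnn j) (hoff j i hne)
        rw [map_sub] at h8
        linarith [hlam i]
    rw [mem_extremePoints]
    refine ⟨hmem, ?_⟩
    intro a ha a' ha' hseg
    obtain ⟨s, u, hs, hu, hsu, heq⟩ := hseg
    have hz : ∀ P Q : ℚ, 0 ≤ P → 0 ≤ Q → s * P + u * Q = 0 → P = 0 ∧ Q = 0 := by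
      intro P Q hP hQ h
      have h1 : s * P = 0 := le_antisymm (by nlinarith [mul_nonneg hu.le hQ])
        (mul_nonneg hs.le hP)
      have h2 : u * Q = 0 := le_antisymm (by nlinarith [mul_nonneg hs.le hP])
        (mul_nonneg hu.le hQ)
      exact ⟨(mul_eq_zero.mp h1).resolve_left (ne_of_gt hs),
             (mul_eq_zero.mp h2).resolve_left (ne_of_gt hu)⟩
    have key : ∀ v, (∀ i ∈ I, coroot i v = 0) → (∀ j ∈ J, x j (lam - v) = 0) → v = μ := by
      intro v hvI hvJ
      have h9 : ∀ i ∈ I, coroot i (v - μ) = 0 := fun i hi => by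
        rw [map_sub, hvI i hi, hI i hi, sub_zero]
      have h10 : ∀ j ∈ J, x j (v - μ) = 0 := by
        intro j hj
        have h11 : v - μ = (lam - μ) - (lam - v) := by abel
        rw [h11, map_sub, hvJ j hj, hJ j hj, sub_zero]
      exact sub_eq_zero.mp (huniq I J hunion (v - μ) h9 h10)
    have haI : ∀ i ∈ I, coroot i a = 0 ∧ coroot i a' = 0 := by
      intro i hi
      have h11 : s * coroot i a + u * coroot i a' = 0 := by
        have h12 := congrArg (coroot i) heq
        rw [map_add, map_smul, map_smul, smul_eq_mul, smul_eq_mul, hI i hi] at h12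
        exact h12
      exact hz _ _ (ha.1 i) (ha'.1 i) h11
    have haJ : ∀ j ∈ J, x j (lam - a) = 0 ∧ x j (lam - a') = 0 := by
      intro j hj
      have hxa : 0 ≤ x j (lam - a) := by
        obtain ⟨_, ca, hca, hra⟩ := ha
        rw [hra, hxs]; exact hca j
      have hxa' : 0 ≤ x j (lam - a') := by
        obtain ⟨_, ca, hca, hra⟩ := ha'
        rw [hra, hxs]; exact hca j
      have h12 : s * x j (lam - a) + u * x j (lam - a') = 0 := by
        have h13 := congrArg (x j) heq
        rw [map_add, map_smul, map_smul, smul_eq_mul, smul_eq_mul] at h13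
        have h14 := hJ j hj
        rw [map_sub] at h14
        rw [map_sub, map_sub]
        linear_combination x j lam * hsu - h13 + h14
      exact hz _ _ hxa hxa' h12
    exact ⟨key a (fun i hi => (haI i hi).1) (fun j hj => (haJ j hj).1),
           key a' (fun i hi => (haI i hi).2) (fun j hj => (haJ j hj).2)⟩
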